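/- Fix an axiom set A and a class name C of arity n, meaning every axiom of A whose head has class C has exactly n arguments. Fix pairwise distinct variable indices t₁, …, tₙ and a further set u⃗ of variable indices disjoint from {t₁, …, tₙ}, and let π_c = C (var t₁, …, var tₙ). Let Q be a finite list of predicates and τ a type, all of whose variables lie in {t₁, …, tₙ} ∪ u⃗, and assume the variables occurring in any class-C axiom of A are disjoint from {t₁, …, tₙ} ∪ u⃗. For each class-C axiom i = (P_i ⇒ C τ⃗_i) ∈ A, let S_i be the substitution with S_i tⱼ = τ⃗_i[j] for 1 ≤ j ≤ n and S_i m = var m for all other m. Define gr(σ_x) = { S τ | S a substitution that is ground on {t₁, …, tₙ} ∪ u⃗ and the identity elsewhere, with ∅ ⊩_A S π_c and ∅ ⊩_A S q for every q ∈ Q }, and for each class-C axiom i define gr(σ_{x,i}) = { V (S_i τ) | V a ground substitution with ∅ ⊩_A V p for every p ∈ P_i and ∅ ⊩_A V (S_i q) for every q ∈ Q }. Then gr(σ_x) = ⋃_i gr(σ_{x,i}), the union ranging over all class-C axioms i ∈ A. (The ground instances of the type scheme of a class method are the union of its ground instances at each of the class's instances.) -/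

import Mathlib

/-- Types: variables, constants, and function types. -/
inductive Ty : Type
  | var : ℕ → Ty
  | const : ℕ → Ty
  | arrow : Ty → Ty → Ty
  deriving DecidableEq

/-- A type is ground if it contains no variables. -/
def Ty.Ground : Ty → Prop
  | .var _ => False
  | .const _ => True
  | .arrow t u => t.Ground ∧ u.Ground

/-- Homomorphic extension of a substitution `S : ℕ → Ty` to types. -/
def Ty.subst (S : ℕ → Ty) : Ty → Ty
  | .var n => S n
  | .const k => .const k
  | .arrow t u => .arrow (t.subst S) (u.subst S)

/-- A substitution is ground if it maps every variable to a ground type. -/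
def GroundSubst (S : ℕ → Ty) : Prop := ∀ n, (S n).Ground

/-- A predicate `C τ⃗`: a class name applied to a list of types. -/
structure OPred : Type where
  cls : ℕ
  args : List Ty
  deriving DecidableEq

/-- Substitutions act on predicates argumentwise. -/
def OPred.subst (S : ℕ → Ty) (p : OPred) : OPred := ⟨p.cls, p.args.map (Ty.subst S)⟩

/-- An instance axiom `Q ⇒ π₀` with context `Q` and head `π₀`. -/
structure Axm : Type where
  ctx : List OPred
  head : OPred

/-- The entailment relation `P ⊩_A π`. -/
inductive Entails (A : Set Axm) : Set OPred → OPred → Prop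
  | assume {P : Set OPred} {π : OPred} : π ∈ P → Entails A P π
  | axm {P : Set OPred} {ax : Axm} {S : ℕ → Ty} {π : OPred} :
      ax ∈ A → ax.head.subst S = π →
      (∀ q ∈ ax.ctx, Entails A P (q.subst S)) →
      Entails A P π

/-- The set of variable indices occurring in a type. -/
def Ty.vars : Ty → Set ℕ
  | .var n => {n}
  | .const _ => ∅
  | .arrow t u => t.vars ∪ u.vars

/-- The variables occurring in a predicate. -/
def OPred.vars (π : OPred) : Set ℕ := ⋃ t ∈ π.args, t.vars

/-- The variables occurring in an axiom (head and context). -/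
def Axm.vars (ax : Axm) : Set ℕ := ax.head.vars ∪ ⋃ q ∈ ax.ctx, q.vars

lemma ty_subst_congr : ∀ (τ : Ty) {S T : ℕ → Ty},
    (∀ m ∈ τ.vars, S m = T m) → τ.subst S = τ.subst T := by
  intro τ
  induction τ with
  | var n => intro S T h; exact h n rfl
  | const k => intro S T h; rfl
  | arrow a b iha ihb =>
    intro S T h
    simp only [Ty.subst]
    rw [iha fun m hm => h m (Set.mem_union_left _ hm),
        ihb fun m hm => h m (Set.mem_union_right _ hm)]

lemma ty_subst_comp (S T : ℕ → Ty) : ∀ τ : Ty,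
    (τ.subst S).subst T = τ.subst (fun m => (S m).subst T) := by
  intro τ
  induction τ with
  | var n => rfl
  | const k => rfl
  | arrow a b iha ihb => simp only [Ty.subst, iha, ihb]

lemma ty_ground_subst {S : ℕ → Ty} (hS : ∀ m, (S m).Ground) : ∀ τ : Ty, (τ.subst S).Ground := by
  intro τ
  induction τ with
  | var n => exact hS n
  | const k => trivial
  | arrow a b iha ihb => exact ⟨iha, ihb⟩

lemma ty_subst_of_ground {S : ℕ → Ty} : ∀ {τ : Ty}, τ.Ground → τ.subst S = τ
  | .var _, h => absurd h (by simp [Ty.Ground])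
  | .const _, _ => rfl
  | .arrow a b, h => by
    simp only [Ty.subst]
    rw [ty_subst_of_ground h.1, ty_subst_of_ground h.2]

lemma opred_subst_congr {S T : ℕ → Ty} {p : OPred}
    (h : ∀ m ∈ p.vars, S m = T m) : p.subst S = p.subst T := by
  unfold OPred.subst
  congr 1
  apply List.map_congr_left
  intro a ha
  exact ty_subst_congr a fun m hm => h m (Set.mem_biUnion ha hm)

lemma list_getD_eq_getElem' {α} (l : List α) (d : α) {i : ℕ} (h : i < l.length) :
    l.getD i d = l[i] := by
  simp [List.getD_eq_getElem?_getD, List.getElem?_eq_getElem h]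

lemma opred_subst_comp (S T : ℕ → Ty) (p : OPred) :
    (p.subst S).subst T = p.subst (fun m => (S m).subst T) := by
  simp [OPred.subst, ty_subst_comp, Function.comp]

lemma entails_subst {A : Set Axm} {P : Set OPred} {π : OPred}
    (h : Entails A P π) (T : ℕ → Ty) :
    Entails A (OPred.subst T '' P) (π.subst T) := by
  induction h with
  | assume h => exact .assume ⟨_, h, rfl⟩
  | @axm ax S π hax hhead hctx ih =>
    refine Entails.axm (S := fun m => (S m).subst T) hax ?_ ?_
    · rw [← opred_subst_comp, hhead]
    · intro q hq
      rw [← opred_subst_comp]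
      exact ih q hq

lemma entails_empty_subst {A : Set Axm} {π : OPred}
    (h : Entails A ∅ π) (T : ℕ → Ty) : Entails A ∅ (π.subst T) := by
  simpa using entails_subst h T

/-- The ground instances of the type scheme of a class method are the union of its
ground instances at each of the class's instances:
`gr(σ_x) = ⋃_{⟨x,d⟩ ∈ dom Im} gr(σ_{x,d})`. -/
theorem method_scheme_ground_instances
    (A : Set Axm) (C n : ℕ)
    -- `C` has arity `n` in `A`
    (harity : ∀ ax ∈ A, ax.head.cls = C → ax.head.args.length = n)
    -- class variables `t₁, …, tₙ`, pairwise distinct, and further variables `u⃗`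
    (t : Fin n → ℕ) (ht : Function.Injective t)
    (u : Set ℕ) (htu : ∀ j : Fin n, t j ∉ u)
    -- the context `Q` and type `τ` of the method's signature, with variables in
    -- `{t₁, …, tₙ} ∪ u⃗`
    (Q : List OPred) (τ : Ty)
    (hτ : τ.vars ⊆ Set.range t ∪ u)
    (hQ : ∀ q ∈ Q, q.vars ⊆ Set.range t ∪ u)
    -- the variables of class-`C` axioms are disjoint from `{t₁, …, tₙ} ∪ u⃗`
    (hdisj : ∀ ax ∈ A, ax.head.cls = C → Disjoint ax.vars (Set.range t ∪ u))
    -- for each class-`C` axiom `i = (P_i ⇒ C τ⃗_i)`, the substitution `S_i`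
    -- with `S_i tⱼ = τ⃗_i[j]` and `S_i m = var m` for all other `m`
    (Si : Axm → ℕ → Ty)
    (hSi : ∀ ax ∈ A, ax.head.cls = C →
      (∀ j : Fin n, Si ax (t j) = ax.head.args.getD j (Ty.var 0)) ∧
      (∀ m : ℕ, m ∉ Set.range t → Si ax m = Ty.var m)) :
    -- `gr(σ_x)` …
    { υ : Ty | ∃ S : ℕ → Ty,
        (∀ m ∈ Set.range t ∪ u, (S m).Ground) ∧
        (∀ m, m ∉ Set.range t ∪ u → S m = Ty.var m) ∧
        Entails A ∅ (OPred.subst S ⟨C, List.ofFn fun j => Ty.var (t j)⟩) ∧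
        (∀ q ∈ Q, Entails A ∅ (q.subst S)) ∧
        υ = τ.subst S }
    -- … equals `⋃_i gr(σ_{x,i})`
    = { υ : Ty | ∃ ax ∈ A, ax.head.cls = C ∧ ∃ V : ℕ → Ty,
        GroundSubst V ∧
        (∀ p ∈ ax.ctx, Entails A ∅ (p.subst V)) ∧
        (∀ q ∈ Q, Entails A ∅ ((q.subst (Si ax)).subst V)) ∧
        υ = (τ.subst (Si ax)).subst V } := by
  classical
  ext υ
  simp only [Set.mem_setOf_eq]
  constructor
  · rintro ⟨S, hSg, hSid, hent, hQent, rfl⟩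
    cases hent with
    | assume h => exact absurd h (Set.notMem_empty _)
    | axm hax hhead hctx =>
      rename_i ax S'
      have hcls : ax.head.cls = C := by
        have := congrArg OPred.cls hhead
        simpa [OPred.subst] using this
      have hlen : ax.head.args.length = n := harity ax hax hcls
      have hargs : ax.head.args.map (Ty.subst S') = List.ofFn fun j => S (t j) := by
        have := congrArg OPred.args hhead
        simpa [OPred.subst, List.map_ofFn, Ty.subst, Function.comp, Function.comp_def] using this
      have hjlt : ∀ j : Fin n, (j : ℕ) < ax.head.args.length := fun j => hlen ▸ j.isLt
      have factA : ∀ j : Fin n, (ax.head.args.getD j (Ty.var 0)).subst S' = S (t j) := by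
        intro j
        have h2 : (ax.head.args.map (Ty.subst S'))[(j : ℕ)]'(by simpa using hjlt j)
            = (List.ofFn fun j => S (t j))[(j : ℕ)]'(by simp) := by
          simp_rw [hargs]
        rw [list_getD_eq_getElem' _ _ (hjlt j)]
        simpa using h2
      have varsub : ∀ j : Fin n, (ax.head.args.getD j (Ty.var 0)).vars ⊆ ax.vars := by
        intro j m hm
        have hmem : ax.head.args.getD (j : ℕ) (Ty.var 0) ∈ ax.head.args := by
          rw [list_getD_eq_getElem' _ _ (hjlt j)]
          exact List.getElem_mem _
        exact Set.mem_union_left _ (Set.mem_biUnion hmem hm)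
      set g : ℕ → Ty := fun _ => Ty.const 0 with hg_def
      have hg : ∀ m, (g m).Ground := fun _ => trivial
      set V : ℕ → Ty := fun m =>
        if m ∈ Set.range t ∪ u then S m else (S' m).subst g with hV_def
      have hVax : ∀ m ∈ ax.vars, V m = (S' m).subst g := by
        intro m hm
        have hnm : m ∉ Set.range t ∪ u := Set.disjoint_left.mp (hdisj ax hax hcls) hm
        simp only [hV_def]
        rw [if_neg hnm]
      have factC : ∀ j : Fin n, (ax.head.args.getD j (Ty.var 0)).subst V = S (t j) := by
        intro j
        rw [ty_subst_congr _ (fun m hm => hVax m (varsub j hm)),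
            ← ty_subst_comp, factA j,
            ty_subst_of_ground (hSg _ (Set.mem_union_left _ ⟨j, rfl⟩))]
      have factD : ∀ m ∈ Set.range t ∪ u, (Si ax m).subst V = S m := by
        intro m hm
        by_cases hr : m ∈ Set.range t
        · obtain ⟨j, rfl⟩ := hr
          rw [(hSi ax hax hcls).1 j]
          exact factC j
        · rw [(hSi ax hax hcls).2 m hr]
          show V m = S m
          simp only [hV_def]
          rw [if_pos hm]
      have hVground : GroundSubst V := by
        intro m
        by_cases hm : m ∈ Set.range t ∪ u
        · simp only [hV_def]
          rw [if_pos hm]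
          exact hSg m hm
        · simp only [hV_def]
          rw [if_neg hm]
          exact ty_ground_subst hg _
      refine ⟨ax, hax, hcls, V, hVground, ?_, ?_, ?_⟩
      · intro p hp
        have hvars : p.vars ⊆ ax.vars := fun m hm =>
          Set.mem_union_right _ (Set.mem_biUnion hp hm)
        have heq : p.subst V = (p.subst S').subst g := by
          rw [opred_subst_comp]
          exact opred_subst_congr fun m hm => hVax m (hvars hm)
        rw [heq]
        exact entails_empty_subst (hctx p hp) g
      · intro q hq
        have heq : (q.subst (Si ax)).subst V = q.subst S := by
          rw [opred_subst_comp]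
          exact opred_subst_congr fun m hm => factD m (hQ q hq hm)
        rw [heq]
        exact hQent q hq
      · rw [ty_subst_comp]
        exact (ty_subst_congr τ fun m hm => factD m (hτ hm)).symm
  · rintro ⟨ax, hax, hcls, V, hVg, hPent, hQent, rfl⟩
    have hlen : ax.head.args.length = n := harity ax hax hcls
    set S : ℕ → Ty := fun m =>
      if m ∈ Set.range t ∪ u then (Si ax m).subst V else Ty.var m with hS_def
    have hSval : ∀ m ∈ Set.range t ∪ u, S m = (Si ax m).subst V := by
      intro m hm
      simp only [hS_def]
      rw [if_pos hm]
    refine ⟨S, ?_, ?_, ?_, ?_, ?_⟩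
    · intro m hm
      rw [hSval m hm]
      exact ty_ground_subst hVg _
    · intro m hm
      simp only [hS_def]
      rw [if_neg hm]
    · refine Entails.axm (S := V) hax ?_ hPent
      have hargs : ax.head.args.map (Ty.subst V) = List.ofFn fun j => S (t j) := by
        refine List.ext_getElem (by simp [hlen]) ?_
        intro i h1 h2
        have hin : i < n := by simpa using h2
        have hil : i < ax.head.args.length := by omega
        simp only [List.getElem_map, List.getElem_ofFn]
        rw [hSval (t ⟨i, hin⟩) (Set.mem_union_left _ ⟨⟨i, hin⟩, rfl⟩),
            (hSi ax hax hcls).1 ⟨i, hin⟩]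
        congr 1
        exact (list_getD_eq_getElem' _ _ hil).symm
      show OPred.mk (ax.head.subst V).cls (ax.head.subst V).args = _
      simp only [OPred.subst, List.map_ofFn]
      rw [hcls, hargs]
      rfl
    · intro q hq
      have heq : q.subst S = (q.subst (Si ax)).subst V := by
        rw [opred_subst_comp]
        exact opred_subst_congr fun m hm => hSval m (hQ q hq hm)
      rw [heq]
      exact hQent q hq
    · rw [ty_subst_comp]
      exact ty_subst_congr τ fun m hm => (hSval m (hτ hm)).symm
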